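/- If α lies in Λ²₇ or in Λ²₁₄ and the pullback of α to the hyperplane {t = 0} = ℂ³ ⊂ ℝ⁷ vanishes (that is, α(u,w) = 0 for all u, w ∈ ℂ³), then α = 0. -/

import Mathlib

/- STATEMENT 7: if α lies in Λ²₇ or in Λ²₁₄ and the pullback of α to the hyperplane
{t = 0} = ℂ³ ⊂ ℝ⁷ vanishes (i.e. α(u,w) = 0 for all u, w ∈ ℂ³), then α = 0.

We identify duals with the underlying spaces via the standard bases, so forms are elements
of the exterior algebras of `V7 = Fin 7 → ℝ` and (for the hyperplane) `V6 = Fin 6 → ℝ`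
(wedge = multiplication).  Coordinates on ℝ⁷: `t = ε 0, x₁ = ε 1, …, y₃ = ε 6`.
`Res : E7 →ₐ E6` is pullback of forms under the inclusion ℂ³ = {t = 0} ↪ ℝ⁷; for a 2-form
α, `Res α = 0` says exactly that α(u,w) = 0 for all u, w in the hyperplane. -/

noncomputable section
open ExteriorAlgebra

abbrev V6 : Type := Fin 6 → ℝ
abbrev E6 : Type := ExteriorAlgebra ℝ V6
abbrev V7 : Type := Fin 7 → ℝ
abbrev E7 : Type := ExteriorAlgebra ℝ V7

def ε (i : Fin 7) : E7 := ExteriorAlgebra.ι ℝ (Pi.single i 1)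

/-- Contraction (interior product) `ι_v` with the vector `v`, in the first slot. -/
def ctr (v : V7) : E7 →ₗ[ℝ] E7 :=
  CliffordAlgebra.contractLeft ((Pi.basisFun ℝ (Fin 7)).toDual v)

def ω : E7 := ε 1 * ε 2 + ε 3 * ε 4 + ε 5 * ε 6
def ρ : E7 := -(ε 2 * ε 4 * ε 6) + ε 2 * ε 3 * ε 5 + ε 1 * ε 4 * ε 5 + ε 1 * ε 3 * ε 6
def φ₀ : E7 := ω * ε 0 + ρ

/-- The dual-coordinate restriction map `V7 → V6` (dual to the inclusion of the
hyperplane {t = 0}, where t has index 0). -/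
def proj : V7 →ₗ[ℝ] V6 := LinearMap.funLeft ℝ ℝ Fin.succ

/-- Pullback (restriction) of forms on ℝ⁷ to the hyperplane {t = 0} = ℂ³. -/
def Res : E7 →ₐ[ℝ] E6 :=
  ExteriorAlgebra.lift ℝ ⟨(ExteriorAlgebra.ι ℝ).comp proj, fun _ =>
    ExteriorAlgebra.ι_sq_zero _⟩

/-- The linear map `v ↦ ι_vφ₀`. -/
def iotaPhi : V7 →ₗ[ℝ] E7 :=
  ((CliffordAlgebra.contractLeft (Q := (0 : QuadraticForm ℝ V7))).flip φ₀) ∘ₗ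
    (Pi.basisFun ℝ (Fin 7)).toDual

/-- `Λ²₇ = {ι_vφ₀ : v ∈ ℝ⁷}`. -/
def Λ27 : Submodule ℝ E7 := LinearMap.range iotaPhi

/-- `Λ²₁₄ = {α a 2-form : α ∧ ι_vφ₀ ∧ φ₀ = 0 for all v}`. -/
def Λ14 : Submodule ℝ E7 where
  carrier := {α | α ∈ ⋀[ℝ]^2 V7 ∧ ∀ v : V7, α * ctr v φ₀ * φ₀ = 0}
  add_mem' := by
    rintro a b ⟨ha2, ha⟩ ⟨hb2, hb⟩
    exact ⟨add_mem ha2 hb2, fun v => by rw [add_mul, add_mul, ha v, hb v, add_zero]⟩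
  zero_mem' := ⟨zero_mem _, fun v => by rw [zero_mul, zero_mul]⟩
  smul_mem' := by
    rintro c a ⟨ha2, ha⟩
    exact ⟨Submodule.smul_mem _ c ha2,
      fun v => by rw [smul_mul_assoc, smul_mul_assoc, ha v, smul_zero]⟩

lemma toDual_single (v : V7) (i : Fin 7) :
    (Pi.basisFun ℝ (Fin 7)).toDual v (Pi.single i 1) = v i := by
  have h : (Pi.single i 1 : V7) = Pi.basisFun ℝ (Fin 7) i := by simp [Pi.basisFun_apply]
  rw [h, Module.Basis.toDual_apply_left]; simp

lemma ctr_eps_mul (v : V7) (i : Fin 7) (x : E7) :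
    ctr v (ε i * x) = v i • x - ε i * ctr v x := by
  rw [ctr, ε]
  exact (CliffordAlgebra.contractLeft_ι_mul _ _ _).trans (by rw [toDual_single])

lemma ctr_eps (v : V7) (i : Fin 7) :
    ctr v (ε i) = algebraMap ℝ E7 (v i) := by
  rw [ctr, ε, CliffordAlgebra.contractLeft_ι, toDual_single]

lemma eps_sq (i : Fin 7) : ε i * ε i = 0 := ExteriorAlgebra.ι_sq_zero _

lemma eps_swap (i j : Fin 7) : ε j * ε i = -(ε i * ε j) := by
  have := ExteriorAlgebra.ι_add_mul_swap (R := ℝ) (Pi.single i 1 : V7) (Pi.single j 1)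
  rw [ε, ε]; linear_combination (norm := noncomm_ring) this

lemma ctr_one (v : V7) : ctr v 1 = 0 := CliffordAlgebra.contractLeft_one _ _

def η (i : Fin 6) : E6 := ExteriorAlgebra.ι ℝ (Pi.single i 1)

def ctr6 (v : V6) : E6 →ₗ[ℝ] E6 :=
  CliffordAlgebra.contractLeft ((Pi.basisFun ℝ (Fin 6)).toDual v)

lemma toDual_single6 (v : V6) (i : Fin 6) :
    (Pi.basisFun ℝ (Fin 6)).toDual v (Pi.single i 1) = v i := by
  have h : (Pi.single i 1 : V6) = Pi.basisFun ℝ (Fin 6) i := by simp [Pi.basisFun_apply]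
  rw [h, Module.Basis.toDual_apply_left]; simp

lemma ctr6_eta_mul (v : V6) (i : Fin 6) (x : E6) :
    ctr6 v (η i * x) = v i • x - η i * ctr6 v x := by
  rw [ctr6, η]
  exact (CliffordAlgebra.contractLeft_ι_mul _ _ _).trans (by rw [toDual_single6])

lemma ctr6_eta (v : V6) (i : Fin 6) :
    ctr6 v (η i) = algebraMap ℝ E6 (v i) := by
  rw [ctr6, η, CliffordAlgebra.contractLeft_ι, toDual_single6]


lemma Res_eps_aux (i : Fin 7) (x : E6) (h : ExteriorAlgebra.ι ℝ (proj (Pi.single i 1)) = x) :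
    Res (ε i) = x := by rw [Res, ε, ExteriorAlgebra.lift_ι_apply]; exact h

lemma Res_eps0 : Res (ε 0) = 0 := by
  apply Res_eps_aux
  have : proj (Pi.single (0:Fin 7) 1) = 0 := by
    funext j; fin_cases j <;> simp [proj, Pi.single_apply] <;> decide
  rw [this, map_zero]

lemma Res_eps1 : Res (ε 1) = η 0 := by
  apply Res_eps_aux
  have : proj (Pi.single (1:Fin 7) 1) = Pi.single (0:Fin 6) 1 := by
    funext j; fin_cases j <;> simp [proj, Pi.single_apply] <;> decide
  rw [this]; rfl

lemma Res_eps2 : Res (ε 2) = η 1 := by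
  apply Res_eps_aux
  have : proj (Pi.single (2:Fin 7) 1) = Pi.single (1:Fin 6) 1 := by
    funext j; fin_cases j <;> simp [proj, Pi.single_apply] <;> decide
  rw [this]; rfl

lemma Res_eps3 : Res (ε 3) = η 2 := by
  apply Res_eps_aux
  have : proj (Pi.single (3:Fin 7) 1) = Pi.single (2:Fin 6) 1 := by
    funext j; fin_cases j <;> simp [proj, Pi.single_apply] <;> decide
  rw [this]; rfl

lemma Res_eps4 : Res (ε 4) = η 3 := by
  apply Res_eps_aux
  have : proj (Pi.single (4:Fin 7) 1) = Pi.single (3:Fin 6) 1 := by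
    funext j; fin_cases j <;> simp [proj, Pi.single_apply] <;> decide
  rw [this]; rfl

lemma Res_eps5 : Res (ε 5) = η 4 := by
  apply Res_eps_aux
  have : proj (Pi.single (5:Fin 7) 1) = Pi.single (4:Fin 6) 1 := by
    funext j; fin_cases j <;> simp [proj, Pi.single_apply] <;> decide
  rw [this]; rfl

lemma Res_eps6 : Res (ε 6) = η 5 := by
  apply Res_eps_aux
  have : proj (Pi.single (6:Fin 7) 1) = Pi.single (5:Fin 6) 1 := by
    funext j; fin_cases j <;> simp [proj, Pi.single_apply] <;> decide
  rw [this]; rfl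

lemma ctr6_one (v : V6) : ctr6 v 1 = 0 := CliffordAlgebra.contractLeft_one _ _

lemma iota_expand (w : V7) : ExteriorAlgebra.ι ℝ w = ∑ i, w i • ε i := by
  have hw : w = ∑ i, w i • (Pi.single i 1 : V7) := by
    funext j; simp [Finset.sum_apply, Pi.single_apply]
  conv_lhs => rw [hw]
  simp [ε]

lemma mem_span_eps (α : E7) (hα : α ∈ ⋀[ℝ]^2 (V7)) :
    ∃ c : Fin 7 × Fin 7 → ℝ, ∑ p : Fin 7 × Fin 7, c p • (ε p.1 * ε p.2) = α := by
  rw [← Submodule.mem_span_range_iff_exists_fun]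
  rw [← ExteriorAlgebra.ιMulti_span_fixedDegree] at hα
  refine Submodule.span_le.mpr ?_ hα
  rintro _ ⟨f, rfl⟩
  rw [ExteriorAlgebra.ιMulti_apply]
  have : (List.ofFn fun i => ExteriorAlgebra.ι ℝ (f i)).prod
      = ExteriorAlgebra.ι ℝ (f 0) * ExteriorAlgebra.ι ℝ (f 1) := by
    simp [List.ofFn_succ]
  rw [this, iota_expand (f 0), iota_expand (f 1), Finset.sum_mul_sum]
  apply Submodule.sum_mem
  intro i _
  apply Submodule.sum_mem
  intro j _
  rw [smul_mul_assoc, mul_smul_comm, smul_smul]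
  exact Submodule.smul_mem _ _ (Submodule.subset_span ⟨(i, j), rfl⟩)

lemma sw10 : ε 1 * ε 0 = -(ε 0 * ε 1) := eps_swap 0 1
lemma sw20 : ε 2 * ε 0 = -(ε 0 * ε 2) := eps_swap 0 2
lemma sw30 : ε 3 * ε 0 = -(ε 0 * ε 3) := eps_swap 0 3
lemma sw40 : ε 4 * ε 0 = -(ε 0 * ε 4) := eps_swap 0 4
lemma sw50 : ε 5 * ε 0 = -(ε 0 * ε 5) := eps_swap 0 5
lemma sw60 : ε 6 * ε 0 = -(ε 0 * ε 6) := eps_swap 0 6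
lemma sw21 : ε 2 * ε 1 = -(ε 1 * ε 2) := eps_swap 1 2
lemma sw31 : ε 3 * ε 1 = -(ε 1 * ε 3) := eps_swap 1 3
lemma sw41 : ε 4 * ε 1 = -(ε 1 * ε 4) := eps_swap 1 4
lemma sw51 : ε 5 * ε 1 = -(ε 1 * ε 5) := eps_swap 1 5
lemma sw61 : ε 6 * ε 1 = -(ε 1 * ε 6) := eps_swap 1 6
lemma sw32 : ε 3 * ε 2 = -(ε 2 * ε 3) := eps_swap 2 3
lemma sw42 : ε 4 * ε 2 = -(ε 2 * ε 4) := eps_swap 2 4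
lemma sw52 : ε 5 * ε 2 = -(ε 2 * ε 5) := eps_swap 2 5
lemma sw62 : ε 6 * ε 2 = -(ε 2 * ε 6) := eps_swap 2 6
lemma sw43 : ε 4 * ε 3 = -(ε 3 * ε 4) := eps_swap 3 4
lemma sw53 : ε 5 * ε 3 = -(ε 3 * ε 5) := eps_swap 3 5
lemma sw63 : ε 6 * ε 3 = -(ε 3 * ε 6) := eps_swap 3 6
lemma sw54 : ε 5 * ε 4 = -(ε 4 * ε 5) := eps_swap 4 5
lemma sw64 : ε 6 * ε 4 = -(ε 4 * ε 6) := eps_swap 4 6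
lemma sw65 : ε 6 * ε 5 = -(ε 5 * ε 6) := eps_swap 5 6


set_option maxHeartbeats 8000000 in
theorem stmt7 (α : E7) (h : α ∈ Λ27 ∨ α ∈ Λ14) (h0 : Res α = 0) : α = 0 := by
  rcases h with h | h
  · -- Λ27
    obtain ⟨v, rfl⟩ := h
    have hι : iotaPhi v = ctr v φ₀ := rfl
    rw [hι] at h0 ⊢
    simp only [φ₀, ω, ρ, add_mul, mul_assoc, map_add, map_neg, map_sub, ctr_eps_mul, ctr_eps,
      map_smul, map_mul, map_zero, Res_eps0, Res_eps1, Res_eps2, Res_eps3, Res_eps4, Res_eps5,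
      Res_eps6, mul_zero, zero_mul, smul_zero, zero_sub, sub_zero, zero_add, add_zero, neg_neg,
      mul_neg, neg_zero, smul_neg, AlgHom.commutes, Algebra.algebraMap_eq_smul_one, mul_smul_comm, mul_one, smul_sub, smul_smul, mul_sub, sub_self] at h0
    have hv0 := congrArg (ctr6 (Pi.single 1 1)) (congrArg (ctr6 (Pi.single 0 1)) h0)
    simp only [map_add, map_sub, map_neg, map_smul, map_zero, ctr6_eta_mul, ctr6_eta,
      Pi.single_apply, smul_zero, zero_smul, one_smul, sub_zero, zero_sub, add_zero, zero_add,
      neg_zero, neg_neg, mul_zero, zero_mul, smul_neg, smul_sub, smul_smul,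
      Algebra.algebraMap_eq_smul_one, mul_smul_comm, mul_one, smul_eq_zero, sub_self, one_ne_zero, or_false, smul_eq_mul, mul_one, neg_eq_zero,
      Fin.isValue, Fin.reduceEq, if_true, if_false, ite_smul, reduceIte] at hv0
    have hv1 := congrArg (ctr6 (Pi.single 4 1)) (congrArg (ctr6 (Pi.single 3 1)) h0)
    simp only [map_add, map_sub, map_neg, map_smul, map_zero, ctr6_eta_mul, ctr6_eta,
      Pi.single_apply, smul_zero, zero_smul, one_smul, sub_zero, zero_sub, add_zero, zero_add,
      neg_zero, neg_neg, mul_zero, zero_mul, smul_neg, smul_sub, smul_smul,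
      Algebra.algebraMap_eq_smul_one, mul_smul_comm, mul_one, smul_eq_zero, sub_self, one_ne_zero, or_false, smul_eq_mul, mul_one, neg_eq_zero,
      Fin.isValue, Fin.reduceEq, if_true, if_false, ite_smul, reduceIte] at hv1
    have hv2 := congrArg (ctr6 (Pi.single 4 1)) (congrArg (ctr6 (Pi.single 2 1)) h0)
    simp only [map_add, map_sub, map_neg, map_smul, map_zero, ctr6_eta_mul, ctr6_eta,
      Pi.single_apply, smul_zero, zero_smul, one_smul, sub_zero, zero_sub, add_zero, zero_add,
      neg_zero, neg_neg, mul_zero, zero_mul, smul_neg, smul_sub, smul_smul,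
      Algebra.algebraMap_eq_smul_one, mul_smul_comm, mul_one, smul_eq_zero, sub_self, one_ne_zero, or_false, smul_eq_mul, mul_one, neg_eq_zero,
      Fin.isValue, Fin.reduceEq, if_true, if_false, ite_smul, reduceIte] at hv2
    have hv3 := congrArg (ctr6 (Pi.single 4 1)) (congrArg (ctr6 (Pi.single 1 1)) h0)
    simp only [map_add, map_sub, map_neg, map_smul, map_zero, ctr6_eta_mul, ctr6_eta,
      Pi.single_apply, smul_zero, zero_smul, one_smul, sub_zero, zero_sub, add_zero, zero_add,
      neg_zero, neg_neg, mul_zero, zero_mul, smul_neg, smul_sub, smul_smul,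
      Algebra.algebraMap_eq_smul_one, mul_smul_comm, mul_one, smul_eq_zero, sub_self, one_ne_zero, or_false, smul_eq_mul, mul_one, neg_eq_zero,
      Fin.isValue, Fin.reduceEq, if_true, if_false, ite_smul, reduceIte] at hv3
    have hv4 := congrArg (ctr6 (Pi.single 5 1)) (congrArg (ctr6 (Pi.single 1 1)) h0)
    simp only [map_add, map_sub, map_neg, map_smul, map_zero, ctr6_eta_mul, ctr6_eta,
      Pi.single_apply, smul_zero, zero_smul, one_smul, sub_zero, zero_sub, add_zero, zero_add,
      neg_zero, neg_neg, mul_zero, zero_mul, smul_neg, smul_sub, smul_smul,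
      Algebra.algebraMap_eq_smul_one, mul_smul_comm, mul_one, smul_eq_zero, sub_self, one_ne_zero, or_false, smul_eq_mul, mul_one, neg_eq_zero,
      Fin.isValue, Fin.reduceEq, if_true, if_false, ite_smul, reduceIte] at hv4
    have hv5 := congrArg (ctr6 (Pi.single 2 1)) (congrArg (ctr6 (Pi.single 1 1)) h0)
    simp only [map_add, map_sub, map_neg, map_smul, map_zero, ctr6_eta_mul, ctr6_eta,
      Pi.single_apply, smul_zero, zero_smul, one_smul, sub_zero, zero_sub, add_zero, zero_add,
      neg_zero, neg_neg, mul_zero, zero_mul, smul_neg, smul_sub, smul_smul,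
      Algebra.algebraMap_eq_smul_one, mul_smul_comm, mul_one, smul_eq_zero, sub_self, one_ne_zero, or_false, smul_eq_mul, mul_one, neg_eq_zero,
      Fin.isValue, Fin.reduceEq, if_true, if_false, ite_smul, reduceIte] at hv5
    have hv6 := congrArg (ctr6 (Pi.single 2 1)) (congrArg (ctr6 (Pi.single 0 1)) h0)
    simp only [map_add, map_sub, map_neg, map_smul, map_zero, ctr6_eta_mul, ctr6_eta,
      Pi.single_apply, smul_zero, zero_smul, one_smul, sub_zero, zero_sub, add_zero, zero_add,
      neg_zero, neg_neg, mul_zero, zero_mul, smul_neg, smul_sub, smul_smul,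
      Algebra.algebraMap_eq_smul_one, mul_smul_comm, mul_one, smul_eq_zero, sub_self, one_ne_zero, or_false, smul_eq_mul, mul_one, neg_eq_zero,
      Fin.isValue, Fin.reduceEq, if_true, if_false, ite_smul, reduceIte] at hv6
    have hv : v = 0 := by
      funext i; simp only [Pi.zero_apply]; fin_cases i <;> first | exact hv0 | exact hv1 | exact hv2 | exact hv3 | exact hv4 | exact hv5 | exact hv6 | rfl
    rw [hv, ctr, map_zero, map_zero]; rfl
  · -- Λ14
    obtain ⟨h2, hcond⟩ := h
    obtain ⟨c, hsum⟩ := mem_span_eps α h2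
    rw [Fintype.sum_prod_type] at hsum
    simp only [Fin.sum_univ_seven, eps_sq, smul_zero, add_zero, zero_add] at hsum
    rw [← hsum] at h0
    simp only [map_add, map_smul, map_mul, Res_eps0, Res_eps1, Res_eps2, Res_eps3, Res_eps4,
      Res_eps5, Res_eps6, zero_mul, mul_zero, smul_zero, add_zero, zero_add] at h0
    have hr01 := congrArg (ctr6 (Pi.single 1 1)) (congrArg (ctr6 (Pi.single 0 1)) h0)
    simp only [map_add, map_sub, map_neg, map_smul, map_zero, ctr6_eta_mul, ctr6_eta,
      Pi.single_apply, smul_zero, zero_smul, one_smul, sub_zero, zero_sub, add_zero, zero_add,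
      neg_zero, neg_neg, mul_zero, zero_mul, smul_neg, smul_sub, smul_smul,
      Algebra.algebraMap_eq_smul_one, mul_smul_comm, mul_one, smul_eq_zero, sub_self, one_ne_zero,
      or_false, smul_eq_mul, neg_eq_zero, ← neg_smul, ← add_smul, Fin.isValue, Fin.reduceEq, reduceIte] at hr01
    have hr02 := congrArg (ctr6 (Pi.single 2 1)) (congrArg (ctr6 (Pi.single 0 1)) h0)
    simp only [map_add, map_sub, map_neg, map_smul, map_zero, ctr6_eta_mul, ctr6_eta,
      Pi.single_apply, smul_zero, zero_smul, one_smul, sub_zero, zero_sub, add_zero, zero_add,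
      neg_zero, neg_neg, mul_zero, zero_mul, smul_neg, smul_sub, smul_smul,
      Algebra.algebraMap_eq_smul_one, mul_smul_comm, mul_one, smul_eq_zero, sub_self, one_ne_zero,
      or_false, smul_eq_mul, neg_eq_zero, ← neg_smul, ← add_smul, Fin.isValue, Fin.reduceEq, reduceIte] at hr02
    have hr03 := congrArg (ctr6 (Pi.single 3 1)) (congrArg (ctr6 (Pi.single 0 1)) h0)
    simp only [map_add, map_sub, map_neg, map_smul, map_zero, ctr6_eta_mul, ctr6_eta,
      Pi.single_apply, smul_zero, zero_smul, one_smul, sub_zero, zero_sub, add_zero, zero_add,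
      neg_zero, neg_neg, mul_zero, zero_mul, smul_neg, smul_sub, smul_smul,
      Algebra.algebraMap_eq_smul_one, mul_smul_comm, mul_one, smul_eq_zero, sub_self, one_ne_zero,
      or_false, smul_eq_mul, neg_eq_zero, ← neg_smul, ← add_smul, Fin.isValue, Fin.reduceEq, reduceIte] at hr03
    have hr04 := congrArg (ctr6 (Pi.single 4 1)) (congrArg (ctr6 (Pi.single 0 1)) h0)
    simp only [map_add, map_sub, map_neg, map_smul, map_zero, ctr6_eta_mul, ctr6_eta,
      Pi.single_apply, smul_zero, zero_smul, one_smul, sub_zero, zero_sub, add_zero, zero_add,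
      neg_zero, neg_neg, mul_zero, zero_mul, smul_neg, smul_sub, smul_smul,
      Algebra.algebraMap_eq_smul_one, mul_smul_comm, mul_one, smul_eq_zero, sub_self, one_ne_zero,
      or_false, smul_eq_mul, neg_eq_zero, ← neg_smul, ← add_smul, Fin.isValue, Fin.reduceEq, reduceIte] at hr04
    have hr05 := congrArg (ctr6 (Pi.single 5 1)) (congrArg (ctr6 (Pi.single 0 1)) h0)
    simp only [map_add, map_sub, map_neg, map_smul, map_zero, ctr6_eta_mul, ctr6_eta,
      Pi.single_apply, smul_zero, zero_smul, one_smul, sub_zero, zero_sub, add_zero, zero_add,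
      neg_zero, neg_neg, mul_zero, zero_mul, smul_neg, smul_sub, smul_smul,
      Algebra.algebraMap_eq_smul_one, mul_smul_comm, mul_one, smul_eq_zero, sub_self, one_ne_zero,
      or_false, smul_eq_mul, neg_eq_zero, ← neg_smul, ← add_smul, Fin.isValue, Fin.reduceEq, reduceIte] at hr05
    have hr12 := congrArg (ctr6 (Pi.single 2 1)) (congrArg (ctr6 (Pi.single 1 1)) h0)
    simp only [map_add, map_sub, map_neg, map_smul, map_zero, ctr6_eta_mul, ctr6_eta,
      Pi.single_apply, smul_zero, zero_smul, one_smul, sub_zero, zero_sub, add_zero, zero_add,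
      neg_zero, neg_neg, mul_zero, zero_mul, smul_neg, smul_sub, smul_smul,
      Algebra.algebraMap_eq_smul_one, mul_smul_comm, mul_one, smul_eq_zero, sub_self, one_ne_zero,
      or_false, smul_eq_mul, neg_eq_zero, ← neg_smul, ← add_smul, Fin.isValue, Fin.reduceEq, reduceIte] at hr12
    have hr13 := congrArg (ctr6 (Pi.single 3 1)) (congrArg (ctr6 (Pi.single 1 1)) h0)
    simp only [map_add, map_sub, map_neg, map_smul, map_zero, ctr6_eta_mul, ctr6_eta,
      Pi.single_apply, smul_zero, zero_smul, one_smul, sub_zero, zero_sub, add_zero, zero_add,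
      neg_zero, neg_neg, mul_zero, zero_mul, smul_neg, smul_sub, smul_smul,
      Algebra.algebraMap_eq_smul_one, mul_smul_comm, mul_one, smul_eq_zero, sub_self, one_ne_zero,
      or_false, smul_eq_mul, neg_eq_zero, ← neg_smul, ← add_smul, Fin.isValue, Fin.reduceEq, reduceIte] at hr13
    have hr14 := congrArg (ctr6 (Pi.single 4 1)) (congrArg (ctr6 (Pi.single 1 1)) h0)
    simp only [map_add, map_sub, map_neg, map_smul, map_zero, ctr6_eta_mul, ctr6_eta,
      Pi.single_apply, smul_zero, zero_smul, one_smul, sub_zero, zero_sub, add_zero, zero_add,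
      neg_zero, neg_neg, mul_zero, zero_mul, smul_neg, smul_sub, smul_smul,
      Algebra.algebraMap_eq_smul_one, mul_smul_comm, mul_one, smul_eq_zero, sub_self, one_ne_zero,
      or_false, smul_eq_mul, neg_eq_zero, ← neg_smul, ← add_smul, Fin.isValue, Fin.reduceEq, reduceIte] at hr14
    have hr15 := congrArg (ctr6 (Pi.single 5 1)) (congrArg (ctr6 (Pi.single 1 1)) h0)
    simp only [map_add, map_sub, map_neg, map_smul, map_zero, ctr6_eta_mul, ctr6_eta,
      Pi.single_apply, smul_zero, zero_smul, one_smul, sub_zero, zero_sub, add_zero, zero_add,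
      neg_zero, neg_neg, mul_zero, zero_mul, smul_neg, smul_sub, smul_smul,
      Algebra.algebraMap_eq_smul_one, mul_smul_comm, mul_one, smul_eq_zero, sub_self, one_ne_zero,
      or_false, smul_eq_mul, neg_eq_zero, ← neg_smul, ← add_smul, Fin.isValue, Fin.reduceEq, reduceIte] at hr15
    have hr23 := congrArg (ctr6 (Pi.single 3 1)) (congrArg (ctr6 (Pi.single 2 1)) h0)
    simp only [map_add, map_sub, map_neg, map_smul, map_zero, ctr6_eta_mul, ctr6_eta,
      Pi.single_apply, smul_zero, zero_smul, one_smul, sub_zero, zero_sub, add_zero, zero_add,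
      neg_zero, neg_neg, mul_zero, zero_mul, smul_neg, smul_sub, smul_smul,
      Algebra.algebraMap_eq_smul_one, mul_smul_comm, mul_one, smul_eq_zero, sub_self, one_ne_zero,
      or_false, smul_eq_mul, neg_eq_zero, ← neg_smul, ← add_smul, Fin.isValue, Fin.reduceEq, reduceIte] at hr23
    have hr24 := congrArg (ctr6 (Pi.single 4 1)) (congrArg (ctr6 (Pi.single 2 1)) h0)
    simp only [map_add, map_sub, map_neg, map_smul, map_zero, ctr6_eta_mul, ctr6_eta,
      Pi.single_apply, smul_zero, zero_smul, one_smul, sub_zero, zero_sub, add_zero, zero_add,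
      neg_zero, neg_neg, mul_zero, zero_mul, smul_neg, smul_sub, smul_smul,
      Algebra.algebraMap_eq_smul_one, mul_smul_comm, mul_one, smul_eq_zero, sub_self, one_ne_zero,
      or_false, smul_eq_mul, neg_eq_zero, ← neg_smul, ← add_smul, Fin.isValue, Fin.reduceEq, reduceIte] at hr24
    have hr25 := congrArg (ctr6 (Pi.single 5 1)) (congrArg (ctr6 (Pi.single 2 1)) h0)
    simp only [map_add, map_sub, map_neg, map_smul, map_zero, ctr6_eta_mul, ctr6_eta,
      Pi.single_apply, smul_zero, zero_smul, one_smul, sub_zero, zero_sub, add_zero, zero_add,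
      neg_zero, neg_neg, mul_zero, zero_mul, smul_neg, smul_sub, smul_smul,
      Algebra.algebraMap_eq_smul_one, mul_smul_comm, mul_one, smul_eq_zero, sub_self, one_ne_zero,
      or_false, smul_eq_mul, neg_eq_zero, ← neg_smul, ← add_smul, Fin.isValue, Fin.reduceEq, reduceIte] at hr25
    have hr34 := congrArg (ctr6 (Pi.single 4 1)) (congrArg (ctr6 (Pi.single 3 1)) h0)
    simp only [map_add, map_sub, map_neg, map_smul, map_zero, ctr6_eta_mul, ctr6_eta,
      Pi.single_apply, smul_zero, zero_smul, one_smul, sub_zero, zero_sub, add_zero, zero_add,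
      neg_zero, neg_neg, mul_zero, zero_mul, smul_neg, smul_sub, smul_smul,
      Algebra.algebraMap_eq_smul_one, mul_smul_comm, mul_one, smul_eq_zero, sub_self, one_ne_zero,
      or_false, smul_eq_mul, neg_eq_zero, ← neg_smul, ← add_smul, Fin.isValue, Fin.reduceEq, reduceIte] at hr34
    have hr35 := congrArg (ctr6 (Pi.single 5 1)) (congrArg (ctr6 (Pi.single 3 1)) h0)
    simp only [map_add, map_sub, map_neg, map_smul, map_zero, ctr6_eta_mul, ctr6_eta,
      Pi.single_apply, smul_zero, zero_smul, one_smul, sub_zero, zero_sub, add_zero, zero_add,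
      neg_zero, neg_neg, mul_zero, zero_mul, smul_neg, smul_sub, smul_smul,
      Algebra.algebraMap_eq_smul_one, mul_smul_comm, mul_one, smul_eq_zero, sub_self, one_ne_zero,
      or_false, smul_eq_mul, neg_eq_zero, ← neg_smul, ← add_smul, Fin.isValue, Fin.reduceEq, reduceIte] at hr35
    have hr45 := congrArg (ctr6 (Pi.single 5 1)) (congrArg (ctr6 (Pi.single 4 1)) h0)
    simp only [map_add, map_sub, map_neg, map_smul, map_zero, ctr6_eta_mul, ctr6_eta,
      Pi.single_apply, smul_zero, zero_smul, one_smul, sub_zero, zero_sub, add_zero, zero_add,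
      neg_zero, neg_neg, mul_zero, zero_mul, smul_neg, smul_sub, smul_smul,
      Algebra.algebraMap_eq_smul_one, mul_smul_comm, mul_one, smul_eq_zero, sub_self, one_ne_zero,
      or_false, smul_eq_mul, neg_eq_zero, ← neg_smul, ← add_smul, Fin.isValue, Fin.reduceEq, reduceIte] at hr45
    have hq01 : c (2, 1) = c (1, 2) := by linarith [hr01]
    have hq02 : c (3, 1) = c (1, 3) := by linarith [hr02]
    have hq03 : c (4, 1) = c (1, 4) := by linarith [hr03]
    have hq04 : c (5, 1) = c (1, 5) := by linarith [hr04]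
    have hq05 : c (6, 1) = c (1, 6) := by linarith [hr05]
    have hq12 : c (3, 2) = c (2, 3) := by linarith [hr12]
    have hq13 : c (4, 2) = c (2, 4) := by linarith [hr13]
    have hq14 : c (5, 2) = c (2, 5) := by linarith [hr14]
    have hq15 : c (6, 2) = c (2, 6) := by linarith [hr15]
    have hq23 : c (4, 3) = c (3, 4) := by linarith [hr23]
    have hq24 : c (5, 3) = c (3, 5) := by linarith [hr24]
    have hq25 : c (6, 3) = c (3, 6) := by linarith [hr25]
    have hq34 : c (5, 4) = c (4, 5) := by linarith [hr34]
    have hq35 : c (6, 4) = c (4, 6) := by linarith [hr35]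
    have hq45 : c (6, 5) = c (5, 6) := by linarith [hr45]
    have hα : α = (c (0,1) - c (1,0)) • (ε 0 * ε 1) + (c (0,2) - c (2,0)) • (ε 0 * ε 2)
        + (c (0,3) - c (3,0)) • (ε 0 * ε 3) + (c (0,4) - c (4,0)) • (ε 0 * ε 4)
        + (c (0,5) - c (5,0)) • (ε 0 * ε 5) + (c (0,6) - c (6,0)) • (ε 0 * ε 6) := by
      rw [← hsum]
      simp only [hq01, hq02, hq03, hq04, hq05, hq12, hq13, hq14, hq15, hq23, hq24, hq25, hq34, hq35, hq45]
      simp only [sw10, sw20, sw30, sw40, sw50, sw60, sw21, sw31, sw41, sw51, sw61, sw32, sw42, sw52, sw62, sw43, sw53, sw63, sw54, sw64, sw65]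
      module
    have hw1 := hcond (Pi.single 1 1)
    rw [hα] at hw1
    simp only [φ₀, ω, ρ, map_add, map_neg, map_sub, map_smul, map_zero, ctr_eps_mul, ctr_eps,
      ctr_one, Pi.single_apply, Algebra.algebraMap_eq_smul_one, smul_zero, zero_smul, one_smul,
      sub_zero, zero_sub, add_zero, zero_add, neg_zero, neg_neg, mul_zero, zero_mul, smul_neg,
      smul_sub, smul_smul, mul_smul_comm, smul_mul_assoc, mul_one, add_mul, mul_add, mul_assoc,
      mul_neg, neg_mul, eps_sq, Fin.isValue, Fin.reduceEq, reduceIte] at hw1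
    have ht1 := congrArg (ctr (Pi.single 6 1)) (congrArg (ctr (Pi.single 5 1)) (congrArg (ctr (Pi.single 4 1)) (congrArg (ctr (Pi.single 3 1)) (congrArg (ctr (Pi.single 2 1)) (congrArg (ctr (Pi.single 1 1)) (congrArg (ctr (Pi.single 0 1)) hw1))))))
    simp only [map_add, map_sub, map_neg, map_smul, map_zero, ctr_eps_mul, ctr_eps, ctr_one,
      Pi.single_apply, Algebra.algebraMap_eq_smul_one, smul_zero, zero_smul, one_smul, sub_zero,
      zero_sub, add_zero, zero_add, neg_zero, neg_neg, mul_zero, zero_mul, smul_neg, smul_sub,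
      smul_smul, mul_smul_comm, mul_one, ← neg_smul, ← add_smul, smul_eq_zero, sub_self,
      one_ne_zero, or_false, smul_eq_mul, neg_eq_zero, Fin.isValue, Fin.reduceEq, reduceIte] at ht1
    have hw2 := hcond (Pi.single 2 1)
    rw [hα] at hw2
    simp only [φ₀, ω, ρ, map_add, map_neg, map_sub, map_smul, map_zero, ctr_eps_mul, ctr_eps,
      ctr_one, Pi.single_apply, Algebra.algebraMap_eq_smul_one, smul_zero, zero_smul, one_smul,
      sub_zero, zero_sub, add_zero, zero_add, neg_zero, neg_neg, mul_zero, zero_mul, smul_neg,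
      smul_sub, smul_smul, mul_smul_comm, smul_mul_assoc, mul_one, add_mul, mul_add, mul_assoc,
      mul_neg, neg_mul, eps_sq, Fin.isValue, Fin.reduceEq, reduceIte] at hw2
    have ht2 := congrArg (ctr (Pi.single 6 1)) (congrArg (ctr (Pi.single 5 1)) (congrArg (ctr (Pi.single 4 1)) (congrArg (ctr (Pi.single 3 1)) (congrArg (ctr (Pi.single 2 1)) (congrArg (ctr (Pi.single 1 1)) (congrArg (ctr (Pi.single 0 1)) hw2))))))
    simp only [map_add, map_sub, map_neg, map_smul, map_zero, ctr_eps_mul, ctr_eps, ctr_one,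
      Pi.single_apply, Algebra.algebraMap_eq_smul_one, smul_zero, zero_smul, one_smul, sub_zero,
      zero_sub, add_zero, zero_add, neg_zero, neg_neg, mul_zero, zero_mul, smul_neg, smul_sub,
      smul_smul, mul_smul_comm, mul_one, ← neg_smul, ← add_smul, smul_eq_zero, sub_self,
      one_ne_zero, or_false, smul_eq_mul, neg_eq_zero, Fin.isValue, Fin.reduceEq, reduceIte] at ht2
    have hw3 := hcond (Pi.single 3 1)
    rw [hα] at hw3
    simp only [φ₀, ω, ρ, map_add, map_neg, map_sub, map_smul, map_zero, ctr_eps_mul, ctr_eps,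
      ctr_one, Pi.single_apply, Algebra.algebraMap_eq_smul_one, smul_zero, zero_smul, one_smul,
      sub_zero, zero_sub, add_zero, zero_add, neg_zero, neg_neg, mul_zero, zero_mul, smul_neg,
      smul_sub, smul_smul, mul_smul_comm, smul_mul_assoc, mul_one, add_mul, mul_add, mul_assoc,
      mul_neg, neg_mul, eps_sq, Fin.isValue, Fin.reduceEq, reduceIte] at hw3
    have ht3 := congrArg (ctr (Pi.single 6 1)) (congrArg (ctr (Pi.single 5 1)) (congrArg (ctr (Pi.single 4 1)) (congrArg (ctr (Pi.single 3 1)) (congrArg (ctr (Pi.single 2 1)) (congrArg (ctr (Pi.single 1 1)) (congrArg (ctr (Pi.single 0 1)) hw3))))))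
    simp only [map_add, map_sub, map_neg, map_smul, map_zero, ctr_eps_mul, ctr_eps, ctr_one,
      Pi.single_apply, Algebra.algebraMap_eq_smul_one, smul_zero, zero_smul, one_smul, sub_zero,
      zero_sub, add_zero, zero_add, neg_zero, neg_neg, mul_zero, zero_mul, smul_neg, smul_sub,
      smul_smul, mul_smul_comm, mul_one, ← neg_smul, ← add_smul, smul_eq_zero, sub_self,
      one_ne_zero, or_false, smul_eq_mul, neg_eq_zero, Fin.isValue, Fin.reduceEq, reduceIte] at ht3
    have hw4 := hcond (Pi.single 4 1)
    rw [hα] at hw4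
    simp only [φ₀, ω, ρ, map_add, map_neg, map_sub, map_smul, map_zero, ctr_eps_mul, ctr_eps,
      ctr_one, Pi.single_apply, Algebra.algebraMap_eq_smul_one, smul_zero, zero_smul, one_smul,
      sub_zero, zero_sub, add_zero, zero_add, neg_zero, neg_neg, mul_zero, zero_mul, smul_neg,
      smul_sub, smul_smul, mul_smul_comm, smul_mul_assoc, mul_one, add_mul, mul_add, mul_assoc,
      mul_neg, neg_mul, eps_sq, Fin.isValue, Fin.reduceEq, reduceIte] at hw4
    have ht4 := congrArg (ctr (Pi.single 6 1)) (congrArg (ctr (Pi.single 5 1)) (congrArg (ctr (Pi.single 4 1)) (congrArg (ctr (Pi.single 3 1)) (congrArg (ctr (Pi.single 2 1)) (congrArg (ctr (Pi.single 1 1)) (congrArg (ctr (Pi.single 0 1)) hw4))))))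
    simp only [map_add, map_sub, map_neg, map_smul, map_zero, ctr_eps_mul, ctr_eps, ctr_one,
      Pi.single_apply, Algebra.algebraMap_eq_smul_one, smul_zero, zero_smul, one_smul, sub_zero,
      zero_sub, add_zero, zero_add, neg_zero, neg_neg, mul_zero, zero_mul, smul_neg, smul_sub,
      smul_smul, mul_smul_comm, mul_one, ← neg_smul, ← add_smul, smul_eq_zero, sub_self,
      one_ne_zero, or_false, smul_eq_mul, neg_eq_zero, Fin.isValue, Fin.reduceEq, reduceIte] at ht4
    have hw5 := hcond (Pi.single 5 1)
    rw [hα] at hw5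
    simp only [φ₀, ω, ρ, map_add, map_neg, map_sub, map_smul, map_zero, ctr_eps_mul, ctr_eps,
      ctr_one, Pi.single_apply, Algebra.algebraMap_eq_smul_one, smul_zero, zero_smul, one_smul,
      sub_zero, zero_sub, add_zero, zero_add, neg_zero, neg_neg, mul_zero, zero_mul, smul_neg,
      smul_sub, smul_smul, mul_smul_comm, smul_mul_assoc, mul_one, add_mul, mul_add, mul_assoc,
      mul_neg, neg_mul, eps_sq, Fin.isValue, Fin.reduceEq, reduceIte] at hw5
    have ht5 := congrArg (ctr (Pi.single 6 1)) (congrArg (ctr (Pi.single 5 1)) (congrArg (ctr (Pi.single 4 1)) (congrArg (ctr (Pi.single 3 1)) (congrArg (ctr (Pi.single 2 1)) (congrArg (ctr (Pi.single 1 1)) (congrArg (ctr (Pi.single 0 1)) hw5))))))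
    simp only [map_add, map_sub, map_neg, map_smul, map_zero, ctr_eps_mul, ctr_eps, ctr_one,
      Pi.single_apply, Algebra.algebraMap_eq_smul_one, smul_zero, zero_smul, one_smul, sub_zero,
      zero_sub, add_zero, zero_add, neg_zero, neg_neg, mul_zero, zero_mul, smul_neg, smul_sub,
      smul_smul, mul_smul_comm, mul_one, ← neg_smul, ← add_smul, smul_eq_zero, sub_self,
      one_ne_zero, or_false, smul_eq_mul, neg_eq_zero, Fin.isValue, Fin.reduceEq, reduceIte] at ht5
    have hw6 := hcond (Pi.single 6 1)
    rw [hα] at hw6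
    simp only [φ₀, ω, ρ, map_add, map_neg, map_sub, map_smul, map_zero, ctr_eps_mul, ctr_eps,
      ctr_one, Pi.single_apply, Algebra.algebraMap_eq_smul_one, smul_zero, zero_smul, one_smul,
      sub_zero, zero_sub, add_zero, zero_add, neg_zero, neg_neg, mul_zero, zero_mul, smul_neg,
      smul_sub, smul_smul, mul_smul_comm, smul_mul_assoc, mul_one, add_mul, mul_add, mul_assoc,
      mul_neg, neg_mul, eps_sq, Fin.isValue, Fin.reduceEq, reduceIte] at hw6
    have ht6 := congrArg (ctr (Pi.single 6 1)) (congrArg (ctr (Pi.single 5 1)) (congrArg (ctr (Pi.single 4 1)) (congrArg (ctr (Pi.single 3 1)) (congrArg (ctr (Pi.single 2 1)) (congrArg (ctr (Pi.single 1 1)) (congrArg (ctr (Pi.single 0 1)) hw6))))))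
    simp only [map_add, map_sub, map_neg, map_smul, map_zero, ctr_eps_mul, ctr_eps, ctr_one,
      Pi.single_apply, Algebra.algebraMap_eq_smul_one, smul_zero, zero_smul, one_smul, sub_zero,
      zero_sub, add_zero, zero_add, neg_zero, neg_neg, mul_zero, zero_mul, smul_neg, smul_sub,
      smul_smul, mul_smul_comm, mul_one, ← neg_smul, ← add_smul, smul_eq_zero, sub_self,
      one_ne_zero, or_false, smul_eq_mul, neg_eq_zero, Fin.isValue, Fin.reduceEq, reduceIte] at ht6
    have e1 : c (0,1) - c (1,0) = 0 := by linarith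
    have e2 : c (0,2) - c (2,0) = 0 := by linarith
    have e3 : c (0,3) - c (3,0) = 0 := by linarith
    have e4 : c (0,4) - c (4,0) = 0 := by linarith
    have e5 : c (0,5) - c (5,0) = 0 := by linarith
    have e6 : c (0,6) - c (6,0) = 0 := by linarith
    rw [hα, e1, e2, e3, e4, e5, e6]
    simp
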